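/- For the cascade motif with a shared phosphatase (Motif (k)), let σ̄ = min(S̄, P̄) and σ_μ = min(1+μ₁, μ₂/2). If μ₁F̄ − Ē > 0 and σ_μ(F̄ − Ē/μ₁) > σ̄, then ∂P₀/∂Y₂ > 0 and ∂P₁/∂Y₂ > 0 for all Y₂ in the admissible region, where P₀ = μ₂δ₁(F̄ − f(Y₂) − Y₂)Y₂/(η₂ f(Y₂)) and P₁ = Y₂/(δ₂(F̄ − f(Y₂) − Y₂)), and f(Y₂) = Y₁ is the implicit decreasing solution of S̄ = Φ(Y₁,Y₂). Consequently the steady-state function φ(Y₂) = P₀ + P₁ + (1+μ₂)Y₂ is strictly increasing and multistationarity cannot occur. -/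

import Mathlib

open Set

private lemma aux_pos_of_mul_pos {a t : ℝ} (ha : 0 < a) (h : 0 < a * t) : 0 < t := by
  nlinarith

set_option maxHeartbeats 1000000 in
/-- Motif (k) (cascade with shared phosphatase): if `μ₁F̄ − Ē > 0` and
`σ_μ (F̄ − Ē/μ₁) > σ̄` where `σ̄ = min(S̄, P̄)` and `σ_μ = min(1+μ₁, μ₂/2)`,
then `P₀` and `P₁` are strictly increasing in `Y₂` on the admissible region,
hence the steady-state function `φ` is strictly increasing and
multistationarity cannot occur. -/
theorem motif_k_no_multistationarity (η₁ η₂ δ₁ δ₂ μ₁ μ₂ Ebar Fbar Sbar Pbar : ℝ)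
    (hη₁ : 0 < η₁) (hη₂ : 0 < η₂) (hδ₁ : 0 < δ₁) (hδ₂ : 0 < δ₂)
    (hμ₁ : 0 < μ₁) (hμ₂ : 0 < μ₂) (hE : 0 < Ebar) (hF : 0 < Fbar)
    (hS : 0 < Sbar) (hP : 0 < Pbar)
    (Γ : Set ℝ) (hΓ : Γ = Ico 0 (min Fbar (Sbar / μ₂)))
    (f : ℝ → ℝ) (hfC : ContDiffOn ℝ 1 f Γ) (hfanti : StrictAntiOn f Γ)
    (hsol : ∀ Y₂ ∈ Γ,
      μ₁ * f Y₂ / (η₁ * (Ebar - μ₁ * f Y₂)) +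
        f Y₂ / (δ₁ * (Fbar - f Y₂ - Y₂)) + (1 + μ₁) * f Y₂ + μ₂ * Y₂ = Sbar)
    (hcons : ∀ Y₂ ∈ Γ, 0 < f Y₂ ∧ f Y₂ + Y₂ < Fbar ∧ μ₁ * f Y₂ < Ebar ∧
      (1 + μ₁) * f Y₂ + μ₂ * Y₂ < Sbar ∧ μ₂ * Y₂ < Pbar)
    (hΔ : 0 < μ₁ * Fbar - Ebar)
    (hcond : min Sbar Pbar < min (1 + μ₁) (μ₂ / 2) * (Fbar - Ebar / μ₁)) :
    let P₀ : ℝ → ℝ := fun Y₂ =>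
      μ₂ * δ₁ * (Fbar - f Y₂ - Y₂) * Y₂ / (η₂ * f Y₂)
    let P₁ : ℝ → ℝ := fun Y₂ => Y₂ / (δ₂ * (Fbar - f Y₂ - Y₂))
    let φ : ℝ → ℝ := fun Y₂ => P₀ Y₂ + P₁ Y₂ + (1 + μ₂) * Y₂
    (∀ Y₂ ∈ Γ, 0 < derivWithin P₀ Γ Y₂ ∧ 0 < derivWithin P₁ Γ Y₂) ∧
      StrictMonoOn φ Γ := by
  intro P₀ P₁ φ
  subst hΓ
  set m : ℝ := min Fbar (Sbar / μ₂) with hm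
  have hUD : UniqueDiffOn ℝ (Ico 0 m) := uniqueDiffOn_Ico 0 m
  have hmF : m ≤ Fbar := min_le_left _ _
  set σ : ℝ := min (1 + μ₁) (μ₂ / 2) with hσdef
  have hσpos : 0 < σ := lt_min (by linarith) (by linarith)
  have hσ1 : σ ≤ 1 + μ₁ := min_le_left _ _
  have hσ2 : σ ≤ μ₂ / 2 := min_le_right _ _
  clear_value σ
  -- the main pointwise package
  have key : ∀ x ∈ Ico 0 m, ∃ v₀ v₁ : ℝ, 0 < v₀ ∧ 0 < v₁ ∧
      HasDerivWithinAt (fun y => μ₂ * δ₁ * (Fbar - f y - y) * y / (η₂ * f y)) v₀ (Ico 0 m) x ∧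
      HasDerivWithinAt (fun y => y / (δ₂ * (Fbar - f y - y))) v₁ (Ico 0 m) x := by
    intro x hx
    obtain ⟨ha, hax, haE, hSx, hPx⟩ := hcons x hx
    have hx0 : (0:ℝ) ≤ x := hx.1
    have hg : 0 < Fbar - f x - x := by linarith
    have hE' : 0 < Ebar - μ₁ * f x := by linarith
    have haF : f x < Fbar := by linarith
    have hxF : x < Fbar := lt_of_lt_of_le hx.2 hmF
    have haEdiv : f x < Ebar / μ₁ := (lt_div_iff₀ hμ₁).2 (by linarith [mul_comm μ₁ (f x)])
    have hmin : min Sbar Pbar < σ * (Fbar - f x) := by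
      calc min Sbar Pbar < σ * (Fbar - Ebar / μ₁) := hcond
        _ ≤ σ * (Fbar - f x) := by nlinarith [hσpos, haEdiv]
    -- key geometric inequality : x < Fbar - f x - x
    have hgx : x < Fbar - f x - x := by
      rcases le_total Sbar Pbar with hc | hc
      · have hminS : min Sbar Pbar = Sbar := min_eq_left hc
        have h1 : σ * (f x + 2 * x) ≤ (1 + μ₁) * f x + μ₂ * x := by nlinarith
        have h2 : σ * (f x + 2 * x) < σ * (Fbar - f x) := by
          rw [hminS] at hmin; linarith
        have h3 : f x + 2 * x < Fbar - f x := (mul_lt_mul_iff_right₀ hσpos).1 h2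
        linarith
      · have hminP : min Sbar Pbar = Pbar := min_eq_right hc
        have h1 : σ * (2 * x) ≤ μ₂ * x := by nlinarith
        have h2 : σ * (2 * x) < σ * (Fbar - f x) := by
          rw [hminP] at hmin; linarith
        have h3 : 2 * x < Fbar - f x := (mul_lt_mul_iff_right₀ hσpos).1 h2
        linarith
    -- μ₂ x < (1+μ₁)(Fbar - f x)
    have h1μF : μ₂ * x < (1 + μ₁) * (Fbar - f x) := by
      have hmx : μ₂ * x < min Sbar Pbar := by
        refine lt_min ?_ hPx
        nlinarith [mul_pos (show (0:ℝ) < 1 + μ₁ by linarith) ha]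
      have hσF : σ * (Fbar - f x) ≤ (1 + μ₁) * (Fbar - f x) := by nlinarith [hσ1, haF]
      linarith
    -- derivative of f
    set D : ℝ := derivWithin f (Ico 0 m) x with hD
    have hfd : HasDerivWithinAt f D (Ico 0 m) x :=
      ((hfC.differentiableOn one_ne_zero) x hx).hasDerivWithinAt
    clear_value D
    have hGd : HasDerivWithinAt (fun y => Fbar - f y - y) (-D - 1) (Ico 0 m) x := by
      have := (hfd.const_sub Fbar).sub (hasDerivWithinAt_id x (Ico 0 m))
      simpa [Pi.sub_def] using this
    -- implicit differentiation of the steady-state equation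
    have hW : HasDerivWithinAt
        (fun y => μ₁ * f y / (η₁ * (Ebar - μ₁ * f y)) +
          f y / (δ₁ * (Fbar - f y - y)) + (1 + μ₁) * f y + μ₂ * y)
        ((μ₁ * D * (η₁ * (Ebar - μ₁ * f x)) - μ₁ * f x * (η₁ * -(μ₁ * D))) /
            (η₁ * (Ebar - μ₁ * f x)) ^ 2 +
          (D * (δ₁ * (Fbar - f x - x)) - f x * (δ₁ * (-D - 1))) /
            (δ₁ * (Fbar - f x - x)) ^ 2 +
          (1 + μ₁) * D + μ₂) (Ico 0 m) x := by
      have ht1 : HasDerivWithinAt (fun y => μ₁ * f y / (η₁ * (Ebar - μ₁ * f y)))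
          ((μ₁ * D * (η₁ * (Ebar - μ₁ * f x)) - μ₁ * f x * (η₁ * -(μ₁ * D))) /
            (η₁ * (Ebar - μ₁ * f x)) ^ 2) (Ico 0 m) x := by
        have hden : HasDerivWithinAt (fun y => η₁ * (Ebar - μ₁ * f y)) (η₁ * -(μ₁ * D))
            (Ico 0 m) x := ((hfd.const_mul μ₁).const_sub Ebar).const_mul η₁
        exact (hfd.const_mul μ₁).div hden (ne_of_gt (mul_pos hη₁ hE'))
      have ht2 : HasDerivWithinAt (fun y => f y / (δ₁ * (Fbar - f y - y)))
          ((D * (δ₁ * (Fbar - f x - x)) - f x * (δ₁ * (-D - 1))) /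
            (δ₁ * (Fbar - f x - x)) ^ 2) (Ico 0 m) x :=
        hfd.div (hGd.const_mul δ₁) (ne_of_gt (mul_pos hδ₁ hg))
      have ht3 : HasDerivWithinAt (fun y => (1 + μ₁) * f y) ((1 + μ₁) * D) (Ico 0 m) x :=
        hfd.const_mul _
      have ht4 : HasDerivWithinAt (fun y => μ₂ * y) μ₂ (Ico 0 m) x := by
        simpa using (hasDerivWithinAt_id x (Ico 0 m)).const_mul μ₂
      exact ((ht1.add ht2).add ht3).add ht4
    have hW0 : (μ₁ * D * (η₁ * (Ebar - μ₁ * f x)) - μ₁ * f x * (η₁ * -(μ₁ * D))) /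
            (η₁ * (Ebar - μ₁ * f x)) ^ 2 +
          (D * (δ₁ * (Fbar - f x - x)) - f x * (δ₁ * (-D - 1))) /
            (δ₁ * (Fbar - f x - x)) ^ 2 +
          (1 + μ₁) * D + μ₂ = 0 := by
      have h1 := hW.derivWithin (hUD x hx)
      have h2 : derivWithin
          (fun y => μ₁ * f y / (η₁ * (Ebar - μ₁ * f y)) +
            f y / (δ₁ * (Fbar - f y - y)) + (1 + μ₁) * f y + μ₂ * y) (Ico 0 m) x
          = derivWithin (fun _ => Sbar) (Ico 0 m) x :=
        derivWithin_congr (fun y hy => hsol y hy) (hsol x hx)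
      have h3 : derivWithin (fun _ : ℝ => Sbar) (Ico 0 m) x = 0 :=
        (hasDerivWithinAt_const x (Ico 0 m) Sbar).derivWithin (hUD x hx)
      rw [h2, h3] at h1
      linarith [h1]
    -- linear equation A * D + B = 0
    set A : ℝ := μ₁ * Ebar / (η₁ * (Ebar - μ₁ * f x) ^ 2) +
        (Fbar - x) / (δ₁ * (Fbar - f x - x) ^ 2) + (1 + μ₁) with hAdef
    set B : ℝ := f x / (δ₁ * (Fbar - f x - x) ^ 2) + μ₂ with hBdef
    have hAB : A * D + B = 0 := by
      rw [← hW0, hAdef, hBdef]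
      field_simp
      ring
    have hApos : 0 < A := by
      have t1 : 0 < μ₁ * Ebar / (η₁ * (Ebar - μ₁ * f x) ^ 2) :=
        div_pos (mul_pos hμ₁ hE) (by positivity)
      have t2 : 0 < (Fbar - x) / (δ₁ * (Fbar - f x - x) ^ 2) :=
        div_pos (by linarith) (by positivity)
      rw [hAdef]
      have : (0:ℝ) < 1 + μ₁ := by linarith
      linarith
    have hBpos : 0 < B := by
      have t1 : 0 < f x / (δ₁ * (Fbar - f x - x) ^ 2) := div_pos ha (by positivity)
      rw [hBdef]; linarith
    have hDneg : D < 0 := by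
      have hABval : A * (-D) = B := by linear_combination -hAB
      have := aux_pos_of_mul_pos hApos (by rw [hABval]; exact hBpos)
      linarith
    -- the crucial bound : Fbar - f x + x * D > 0
    have hX : 0 < A * (Fbar - f x) - x * B := by
      have e : A * (Fbar - f x) - x * B =
          μ₁ * Ebar * (Fbar - f x) / (η₁ * (Ebar - μ₁ * f x) ^ 2) +
          ((Fbar - x) * (Fbar - f x) - x * f x) / (δ₁ * (Fbar - f x - x) ^ 2) +
          ((1 + μ₁) * (Fbar - f x) - μ₂ * x) := by
        rw [hAdef, hBdef]; ring
      have t1 : 0 < μ₁ * Ebar * (Fbar - f x) / (η₁ * (Ebar - μ₁ * f x) ^ 2) :=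
        div_pos (by nlinarith) (by positivity)
      have t2 : 0 ≤ ((Fbar - x) * (Fbar - f x) - x * f x) / (δ₁ * (Fbar - f x - x) ^ 2) := by
        apply div_nonneg _ (by positivity)
        have q1 : x * f x ≤ (Fbar - f x) * f x := by nlinarith
        have q2 : (Fbar - f x) * f x ≤ (Fbar - x) * (Fbar - f x) := by nlinarith
        linarith
      rw [e]; linarith
    clear_value A B
    have hkey : 0 < Fbar - f x + x * D := by
      have h' : A * (Fbar - f x + x * D) = A * (Fbar - f x) - x * B + x * (A * D + B) := by
        ring
      rw [hAB] at h'
      have hp : 0 < A * (Fbar - f x + x * D) := by rw [h']; linarith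
      exact aux_pos_of_mul_pos hApos hp
    -- derivatives of P₀ and P₁
    refine ⟨((μ₂ * δ₁ * (-D - 1) * x + μ₂ * δ₁ * (Fbar - f x - x) * 1) * (η₂ * f x) -
        μ₂ * δ₁ * (Fbar - f x - x) * x * (η₂ * D)) / (η₂ * f x) ^ 2,
      (1 * (δ₂ * (Fbar - f x - x)) - x * (δ₂ * (-D - 1))) / (δ₂ * (Fbar - f x - x)) ^ 2,
      ?_, ?_, ?_, ?_⟩
    · apply div_pos _ (by positivity)
      have e : (μ₂ * δ₁ * (-D - 1) * x + μ₂ * δ₁ * (Fbar - f x - x) * 1) * (η₂ * f x) -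
          μ₂ * δ₁ * (Fbar - f x - x) * x * (η₂ * D)
          = η₂ * (μ₂ * δ₁) *
              (f x * (Fbar - f x - x - x) + (-D) * (x * (f x + (Fbar - f x - x)))) := by
        ring
      rw [e]
      have h1 : 0 < f x * (Fbar - f x - x - x) := mul_pos ha (by linarith)
      have h2 : 0 ≤ (-D) * (x * (f x + (Fbar - f x - x))) :=
        mul_nonneg (by linarith) (mul_nonneg hx0 (by linarith))
      have h3 : 0 < η₂ * (μ₂ * δ₁) := by positivity
      exact mul_pos h3 (by linarith)
    · apply div_pos _ (by positivity)
      have e : 1 * (δ₂ * (Fbar - f x - x)) - x * (δ₂ * (-D - 1)) =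
          δ₂ * (Fbar - f x + x * D) := by ring
      rw [e]
      exact mul_pos hδ₂ hkey
    · have hnum : HasDerivWithinAt (fun y => μ₂ * δ₁ * (Fbar - f y - y) * y)
          (μ₂ * δ₁ * (-D - 1) * x + μ₂ * δ₁ * (Fbar - f x - x) * 1) (Ico 0 m) x := by
        have := (hGd.const_mul (μ₂ * δ₁)).mul (hasDerivWithinAt_id x (Ico 0 m))
        simpa [Pi.mul_def, mul_assoc, mul_comm, mul_left_comm] using this
      exact hnum.div (hfd.const_mul η₂) (ne_of_gt (mul_pos hη₂ ha))
    · exact (hasDerivWithinAt_id x (Ico 0 m)).div (hGd.const_mul δ₂)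
        (ne_of_gt (mul_pos hδ₂ hg))
  constructor
  · intro x hx
    obtain ⟨v₀, v₁, h0, h1, hd0, hd1⟩ := key x hx
    have e0 : derivWithin P₀ (Ico 0 m) x = v₀ := hd0.derivWithin (hUD x hx)
    have e1 : derivWithin P₁ (Ico 0 m) x = v₁ := hd1.derivWithin (hUD x hx)
    rw [e0, e1]
    exact ⟨h0, h1⟩
  · have hfc := hfC.continuousOn
    have cG : ContinuousOn (fun y => Fbar - f y - y) (Ico 0 m) :=
      (continuousOn_const.sub hfc).sub continuousOn_id
    have hc0 : ContinuousOn (fun y => μ₂ * δ₁ * (Fbar - f y - y) * y / (η₂ * f y)) (Ico 0 m) :=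
      ContinuousOn.div ((continuousOn_const.mul cG).mul continuousOn_id)
        (continuousOn_const.mul hfc)
        (fun y hy => ne_of_gt (mul_pos hη₂ (hcons y hy).1))
    have hc1 : ContinuousOn (fun y => y / (δ₂ * (Fbar - f y - y))) (Ico 0 m) := by
      refine ContinuousOn.div continuousOn_id (continuousOn_const.mul cG) ?_
      intro y hy
      obtain ⟨h1, h2, _⟩ := hcons y hy
      exact ne_of_gt (mul_pos hδ₂ (by linarith))
    have hcφ : ContinuousOn φ (Ico 0 m) :=
      (hc0.add hc1).add (continuousOn_const.mul continuousOn_id)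
    apply strictMonoOn_of_hasDerivWithinAt_pos
      (f' := fun y => derivWithin φ (Ico 0 m) y) (convex_Ico 0 m) hcφ
    · intro x hxint
      have hx : x ∈ Ico 0 m := interior_subset hxint
      obtain ⟨v₀, v₁, h0, h1, hd0, hd1⟩ := key x hx
      have hφd : HasDerivWithinAt φ (v₀ + v₁ + (1 + μ₂) * 1) (Ico 0 m) x :=
        (hd0.add hd1).add ((hasDerivWithinAt_id x (Ico 0 m)).const_mul (1 + μ₂))
      have heq : derivWithin φ (Ico 0 m) x = v₀ + v₁ + (1 + μ₂) * 1 :=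
        hφd.derivWithin (hUD x hx)
      exact heq.symm ▸ hφd.mono interior_subset
    · intro x hxint
      have hx : x ∈ Ico 0 m := interior_subset hxint
      obtain ⟨v₀, v₁, h0, h1, hd0, hd1⟩ := key x hx
      have hφd : HasDerivWithinAt φ (v₀ + v₁ + (1 + μ₂) * 1) (Ico 0 m) x :=
        (hd0.add hd1).add ((hasDerivWithinAt_id x (Ico 0 m)).const_mul (1 + μ₂))
      have heq : derivWithin φ (Ico 0 m) x = v₀ + v₁ + (1 + μ₂) * 1 :=
        hφd.derivWithin (hUD x hx)
      have hpos : (0:ℝ) < v₀ + v₁ + (1 + μ₂) * 1 := by nlinarith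
      exact heq.symm ▸ hpos
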